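/- arXiv:2309.15579 — 7 statements merged into one kernel-verified Lean document; each statement's English description precedes it below -/
import Mathlib

section
/- Let (C, ⊗) be a locally presentable closed symmetric monoidal abelian category whose monoidal unit V is a finitely presented projective separator. Let N be a finitely presented object of C, and let {X_α} be a filtered inductive system in C with colimit X. Then the canonical morphism Ψ : colim_α Map(N, X_α) → Map(N, X) induced by the structure morphisms X_α → X is an isomorphism, where Map(−,−) denotes the internal hom of C. -/
open CategoryTheory CategoryTheory.Limits Opposite

universe v u

namespace Paper

variable {C : Type u} [Category.{v} C]

/-- The canonical comparison map `colim_α Hom(X, M_α) ⟶ Hom(X, colim_α M_α)` induced by the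
structure morphisms of a cocone `c` on a diagram `D`. -/
noncomputable def canonicalMap (X : C) {J : Type v} [SmallCategory J]
    (D : J ⥤ C) (c : Cocone D) :
    colimit (D ⋙ coyoneda.obj (op X)) → (X ⟶ c.pt) :=
  colimit.desc (D ⋙ coyoneda.obj (op X)) ((coyoneda.obj (op X)).mapCocone c)

/-- An object `X` is finitely presented if for every filtered inductive system the canonical map
`colim_α Hom(X, M_α) → Hom(X, colim_α M_α)` is bijective. -/
def IsFinitelyPresented (X : C) : Prop :=
  ∀ (J : Type v) [SmallCategory J] [IsFiltered J] (D : J ⥤ C) (c : Cocone D),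
    IsColimit c → Function.Bijective (canonicalMap X D c)

/-- An object `X` is finitely generated if for every filtered inductive system the canonical map
`colim_α Hom(X, M_α) → Hom(X, colim_α M_α)` is injective. -/
def IsFinitelyGenerated (X : C) : Prop :=
  ∀ (J : Type v) [SmallCategory J] [IsFiltered J] (D : J ⥤ C) (c : Cocone D),
    IsColimit c → Function.Injective (canonicalMap X D c)

/-- A small category `J` is `κ`-filtered if every diagram in `J` of size `< κ` admits a cocone. -/
def IsCardinalFiltered (J : Type v) [SmallCategory J] (κ : Cardinal.{v}) : Prop :=
  ∀ (K : Type v) [SmallCategory K], Cardinal.mk (Σ k k' : K, k ⟶ k') < κ →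
    ∀ F : K ⥤ J, Nonempty (Cocone F)

/-- An object `X` is `κ`-presentable if `Hom(X, -)` preserves `κ`-filtered colimits. -/
def IsCardinalPresentableObj (κ : Cardinal.{v}) (X : C) : Prop :=
  ∀ (J : Type v) [SmallCategory J], IsCardinalFiltered J κ →
    ∀ (D : J ⥤ C) (c : Cocone D), IsColimit c → Function.Bijective (canonicalMap X D c)

/-- A presentation of `X` as a `κ`-filtered colimit of objects belonging to `S`. -/
structure FilteredPresentation (κ : Cardinal.{v}) (S : Set C) (X : C) where
  J : Type v
  [cat : SmallCategory J]
  filtered : IsCardinalFiltered J κ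
  D : J ⥤ C
  mem : ∀ j, D.obj j ∈ S
  c : Cocone D
  isColimit : IsColimit c
  eq : c.pt = X

attribute [instance] FilteredPresentation.cat

/-- A category is locally presentable if it is cocomplete and there are a regular cardinal `κ`
and a set of `κ`-presentable objects such that every object is a `κ`-filtered colimit of
objects from this set. -/
class LocallyPresentable (C : Type u) [Category.{v} C] : Prop where
  hasColimits : HasColimits C
  presentable : ∃ κ : Cardinal.{v}, κ.IsRegular ∧ ∃ S : Set C, Small.{v} ↥S ∧
    (∀ X ∈ S, IsCardinalPresentableObj κ X) ∧ ∀ X : C, Nonempty (FilteredPresentation κ S X)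

instance (priority := 100) [LocallyPresentable C] : HasColimits C :=
  LocallyPresentable.hasColimits

end Paper


namespace Paper

open MonoidalCategory MonoidalClosed

/-- A morphism in an abelian category with separator `V` is an isomorphism as soon as
composition with it is bijective on `V`-points. -/
theorem isIso_of_bijective_homComp {C : Type u} [Category.{v} C] [Abelian C] {V A B : C}
    (hV : IsSeparator V) (f : A ⟶ B)
    (h : Function.Bijective fun s : V ⟶ A => s ≫ f) : IsIso f := by
  have hmono : Mono f := by
    rw [Preadditive.mono_iff_cancel_zero]
    intro T k hk
    refine hV.def k 0 fun s => ?_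
    have := h.1 (a₁ := s ≫ k) (a₂ := 0) (by simp [Category.assoc, hk])
    simpa using this
  have hepi : Epi f := by
    rw [Preadditive.epi_iff_cancel_zero]
    intro T t ht
    refine hV.def t 0 fun s => ?_
    obtain ⟨s', rfl⟩ := h.2 s
    simp [Category.assoc, ht]
  exact isIso_of_mono_of_epi f

/-- The tensor-hom adjunction bijection `(𝟙_ C ⟶ Map(N, Y)) ≃ (N ⟶ Y)`. -/
@[simps] noncomputable def unitHomEquiv {C : Type u} [Category.{v} C] [MonoidalCategory C]
    [MonoidalClosed C] (N Y : C) : (𝟙_ C ⟶ (ihom N).obj Y) ≃ (N ⟶ Y) where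
  toFun g := (ρ_ N).inv ≫ MonoidalClosed.uncurry g
  invFun h := MonoidalClosed.curry ((ρ_ N).hom ≫ h)
  left_inv g := by simp
  right_inv h := by simp

open MonoidalCategory MonoidalClosed in
/-- In a locally presentable closed symmetric monoidal abelian category whose
unit is a finitely presented projective separator, the internal hom `Map(N, -)` out of a
finitely presented object `N` preserves filtered colimits: the canonical morphism
`colim Map(N, X_a) → Map(N, colim X_a)` is an isomorphism. -/
theorem statement2 {C : Type u} [Category.{v} C] [Abelian C] [MonoidalCategory C]
    [SymmetricCategory C] [MonoidalClosed C] [LocallyPresentable C]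
    (hV1 : IsFinitelyPresented (𝟙_ C)) (hV2 : Projective (𝟙_ C))
    (hV3 : IsSeparator (𝟙_ C))
    (N : C) (hN : IsFinitelyPresented N)
    (J : Type v) [SmallCategory J] [IsFiltered J] (D : J ⥤ C)
    (c : Cocone D) (hc : IsColimit c)
    (c' : Cocone (D ⋙ ihom N)) (hc' : IsColimit c') :
    IsIso (hc'.desc ((ihom N).mapCocone c)) := by
  set f := hc'.desc ((ihom N).mapCocone c) with hf
  apply isIso_of_bijective_homComp hV3
  -- the natural isomorphism of `Type`-valued diagrams given by the adjunction bijection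
  let η : (D ⋙ ihom N) ⋙ coyoneda.obj (op (𝟙_ C)) ≅ D ⋙ coyoneda.obj (op N) :=
    NatIso.ofComponents (fun j => (unitHomEquiv N (D.obj j)).toIso) (by
      intro j j' k
      refine ConcreteCategory.hom_ext _ _ fun x => ?_
      simp only [Functor.comp_obj, Functor.comp_map,
        types_comp_apply, Equiv.toIso_hom_hom_apply, Functor.flip_obj_map, yoneda_map_app,
        TypeCat.ofHom_apply, unitHomEquiv_apply]
      show (ρ_ N).inv ≫ MonoidalClosed.uncurry (x ≫ (ihom N).map (D.map k)) =
        ((ρ_ N).inv ≫ MonoidalClosed.uncurry x) ≫ D.map k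
      rw [MonoidalClosed.uncurry_natural_right, Category.assoc])
  let Φ' := canonicalMap (𝟙_ C) (D ⋙ ihom N) c'
  let Φ := canonicalMap N D c
  have hΦ' : Function.Bijective Φ' := hV1 J (D ⋙ ihom N) c' hc'
  have hΦ : Function.Bijective Φ := hN J D c hc
  -- the comparison map on `V`-points, factored through the adjunction bijections
  have key : (fun s : 𝟙_ C ⟶ c'.pt => s ≫ f) ∘ Φ' =
      (unitHomEquiv N c.pt).symm ∘ Φ ∘ (Limits.HasColimit.isoOfNatIso η).hom := by
    refine funext fun y => ?_
    obtain ⟨j, x, rfl⟩ := Types.jointly_surjective' y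
    show Φ' (colimit.ι ((D ⋙ ihom N) ⋙ coyoneda.obj (op (𝟙_ C))) j x) ≫ f =
      (unitHomEquiv N c.pt).symm (Φ ((Limits.HasColimit.isoOfNatIso η).hom (colimit.ι ((D ⋙ ihom N) ⋙ coyoneda.obj (op (𝟙_ C))) j x)))
    have h1 : Φ' (colimit.ι ((D ⋙ ihom N) ⋙ coyoneda.obj (op (𝟙_ C))) j x) = x ≫ c'.ι.app j :=
      ConcreteCategory.congr_hom (colimit.ι_desc ((coyoneda.obj (op (𝟙_ C))).mapCocone c') j) x
    have h2 : (Limits.HasColimit.isoOfNatIso η).hom (colimit.ι ((D ⋙ ihom N) ⋙ coyoneda.obj (op (𝟙_ C))) j x) =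
        colimit.ι (D ⋙ coyoneda.obj (op N)) j (η.hom.app j x) :=
      ConcreteCategory.congr_hom (Limits.HasColimit.isoOfNatIso_ι_hom η j) x
    have h3 : Φ (colimit.ι (D ⋙ coyoneda.obj (op N)) j (η.hom.app j x)) =
        η.hom.app j x ≫ c.ι.app j :=
      ConcreteCategory.congr_hom (colimit.ι_desc ((coyoneda.obj (op N)).mapCocone c) j) (η.hom.app j x)
    rw [h1, h2, h3]
    have h4 : c'.ι.app j ≫ f = (ihom N).map (c.ι.app j) := hc'.fac ((ihom N).mapCocone c) j
    rw [Category.assoc, h4]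
    apply (unitHomEquiv N c.pt).injective
    simp only [Equiv.apply_symm_apply, unitHomEquiv_apply]
    show (ρ_ N).inv ≫ MonoidalClosed.uncurry (x ≫ (ihom N).map (c.ι.app j)) =
      ((ρ_ N).inv ≫ MonoidalClosed.uncurry x) ≫ c.ι.app j
    rw [MonoidalClosed.uncurry_natural_right, Category.assoc]
  have hcolimMap : Function.Bijective (Limits.HasColimit.isoOfNatIso η).hom :=
    (Limits.HasColimit.isoOfNatIso η).toEquiv.bijective
  have hrhs : Function.Bijective ((unitHomEquiv N c.pt).symm ∘ Φ ∘
      (Limits.HasColimit.isoOfNatIso η).hom) :=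
    ((unitHomEquiv N c.pt).symm.bijective.comp hΦ).comp hcolimMap
  rw [← key] at hrhs
  exact (Function.Bijective.of_comp_iff _ hΦ').mp hrhs

end Paper
end

section
/- Let (C, ⊗) be a locally presentable closed symmetric monoidal abelian category whose monoidal unit V is a finitely presented projective separator. If M and N are finitely presented objects of C, then the tensor product M ⊗ N is finitely presented. -/
open CategoryTheory CategoryTheory.Limits Opposite

universe v u

namespace Paper

section Aux

variable {C : Type u} [Category.{v} C]

/-- Transfer bijectivity of the canonical map along a natural isomorphism
`H ⋙ coyoneda.obj (op W) ≅ coyoneda.obj (op X)`. -/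
lemma canonicalMap_bij_iff {J : Type v} [SmallCategory J] (D : J ⥤ C) (c : Cocone D)
    (H : C ⥤ C) (W X : C) (e : H ⋙ coyoneda.obj (op W) ≅ coyoneda.obj (op X)) :
    Function.Bijective (canonicalMap W (D ⋙ H) (H.mapCocone c)) ↔
      Function.Bijective (canonicalMap X D c) := by
  let i : colimit ((D ⋙ H) ⋙ coyoneda.obj (op W)) ≅ colimit (D ⋙ coyoneda.obj (op X)) :=
    HasColimit.isoOfNatIso (Functor.isoWhiskerLeft D e)
  have key : TypeCat.ofHom (canonicalMap W (D ⋙ H) (H.mapCocone c)) ≫ e.hom.app c.pt =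
      i.hom ≫ TypeCat.ofHom (canonicalMap X D c) := by
    apply colimit.hom_ext
    intro j
    rw [← Category.assoc, ← Category.assoc, HasColimit.isoOfNatIso_ι_hom]
    simp only [canonicalMap, TypeCat.ofHom_eq, Category.assoc, colimit.ι_desc]
    exact e.hom.naturality (c.ι.app j)
  have hbij : ∀ {α β : Type v} (f : α ⟶ β), IsIso f → Function.Bijective f :=
    fun f hf => (isIso_iff_bijective f).1 hf
  have he : Function.Bijective (e.hom.app c.pt) := hbij _ inferInstance
  have hi : Function.Bijective i.hom := hbij _ inferInstance
  have comp_eq : (canonicalMap X D c) ∘ i.hom =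
      (e.hom.app c.pt) ∘ (canonicalMap W (D ⋙ H) (H.mapCocone c)) :=
    funext fun x => (ConcreteCategory.congr_hom key x).symm
  calc Function.Bijective (canonicalMap W (D ⋙ H) (H.mapCocone c))
      ↔ Function.Bijective ((e.hom.app c.pt) ∘ (canonicalMap W (D ⋙ H) (H.mapCocone c))) :=
        (Function.Bijective.of_comp_iff' he _).symm
    _ ↔ Function.Bijective ((canonicalMap X D c) ∘ i.hom) := by rw [comp_eq]
    _ ↔ Function.Bijective (canonicalMap X D c) := Function.Bijective.of_comp_iff _ hi

/-- If `Hom(V, -)` applied to `f` is bijective and `V` is a separator in an abelian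
category, then `f` is an isomorphism. -/
lemma isIso_of_coyoneda_bijective [Abelian C] {V A B : C} (hV : IsSeparator V)
    (f : A ⟶ B) (hf : Function.Bijective (fun s : V ⟶ A => s ≫ f)) : IsIso f := by
  have hmono : Mono f := by
    refine ⟨fun {T} g h hgh => ?_⟩
    apply hV.def
    intro s
    apply hf.1
    show (s ≫ g) ≫ f = (s ≫ h) ≫ f
    rw [Category.assoc, Category.assoc, hgh]
  have hepi : Epi f := by
    apply Abelian.epi_of_cokernel_π_eq_zero
    apply hV.def
    intro s
    obtain ⟨t, ht⟩ := hf.2 s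
    simp only [comp_zero]
    rw [← ht, Category.assoc, cokernel.condition, comp_zero]
  exact isIso_of_mono_of_epi f

open MonoidalCategory in
/-- The natural isomorphism `Hom(W, [M, -]) ≅ Hom(M ⊗ W, -)` coming from the tensor-hom
adjunction. -/
noncomputable def adjCoyIso [MonoidalCategory C] [MonoidalClosed C] (M W : C) :
    ihom M ⋙ coyoneda.obj (op W) ≅ coyoneda.obj (op (M ⊗ W)) :=
  NatIso.ofComponents (fun X => Equiv.toIso (((ihom.adjunction M).homEquiv W X).symm))
    (by
      intro X Y f
      ext g
      exact Adjunction.homEquiv_naturality_right_symm _ _ _)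

end Aux

open MonoidalCategory in
/-- In a locally presentable closed symmetric monoidal abelian category whose
unit is a finitely presented projective separator, the tensor product of two finitely
presented objects is finitely presented. -/
theorem statement3 {C : Type u} [Category.{v} C] [Abelian C] [MonoidalCategory C]
    [SymmetricCategory C] [MonoidalClosed C] [LocallyPresentable C]
    (hV1 : IsFinitelyPresented (𝟙_ C)) (hV2 : Projective (𝟙_ C))
    (hV3 : IsSeparator (𝟙_ C))
    (M N : C) (hM : IsFinitelyPresented M) (hN : IsFinitelyPresented N) :
    IsFinitelyPresented (M ⊗ N) := by
  intro J _ _ D c hc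
  let D' := D ⋙ ihom M
  let c' := (ihom M).mapCocone c
  -- `Hom(V, [M,-]) ≅ Hom(M ⊗ V, -) ≅ Hom(M, -)` via the right unitor.
  let e1 : ihom M ⋙ coyoneda.obj (op (𝟙_ C)) ≅ coyoneda.obj (op M) :=
    adjCoyIso M (𝟙_ C) ≪≫ (coyoneda.mapIso (Iso.op (ρ_ M))).symm
  -- Step 1: the canonical map for `V` along `D'` with cocone `c'` is bijective.
  have h1 : Function.Bijective (canonicalMap (𝟙_ C) D' c') :=
    (canonicalMap_bij_iff D c (ihom M) (𝟙_ C) M e1).2 (hM J D c hc)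
  -- Step 2: compare with the colimit cocone of `D'`.
  let φ : colimit D' ⟶ c'.pt := colimit.desc D' c'
  have h2 : Function.Bijective (canonicalMap (𝟙_ C) D' (colimit.cocone D')) :=
    hV1 J D' (colimit.cocone D') (colimit.isColimit D')
  have key : TypeCat.ofHom (canonicalMap (𝟙_ C) D' c') =
      TypeCat.ofHom (canonicalMap (𝟙_ C) D' (colimit.cocone D')) ≫ (coyoneda.obj (op (𝟙_ C))).map φ := by
    apply colimit.hom_ext
    intro j
    simp only [canonicalMap, ← Category.assoc, colimit.ι_desc]
    ext g
    simp [φ]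
  have h3 : Function.Bijective (fun g : 𝟙_ C ⟶ colimit D' => g ≫ φ) := by
    let E := Equiv.ofBijective _ h2
    have heq : (fun g : 𝟙_ C ⟶ colimit D' => g ≫ φ) = canonicalMap (𝟙_ C) D' c' ∘ E.symm := by
      funext y
      have := ConcreteCategory.congr_hom key (E.symm y)
      simp only [types_comp_apply, TypeCat.ofHom_apply] at this
      have hy : canonicalMap (𝟙_ C) D' (colimit.cocone D') (E.symm y) = y :=
        E.apply_symm_apply y
      rw [hy] at this
      simpa using this.symm
    rw [heq]
    exact h1.comp E.symm.bijective
  -- Step 3: `φ` is an isomorphism, hence `c'` is a colimit cocone.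
  have hiso : IsIso φ := isIso_of_coyoneda_bijective hV3 φ h3
  have hdesc : IsIso ((colimit.isColimit D').desc c') := hiso
  have hc' : IsColimit c' := IsColimit.ofPointIso (colimit.isColimit D')
  -- Step 4: conclude using that `N` is finitely presented and the adjunction.
  have h4 : Function.Bijective (canonicalMap N D' c') := hN J D' c' hc'
  exact (canonicalMap_bij_iff D c (ihom M) N (M ⊗ N) (adjCoyIso M N)).1 h4

end Paper
end

section
/- Let (C, ⊗) be a locally presentable closed symmetric monoidal abelian category whose monoidal unit V is a finitely presented projective separator. If M and N are finitely generated objects of C, then the tensor product M ⊗ N is finitely generated. -/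
open CategoryTheory CategoryTheory.Limits Opposite

universe v u

namespace Paper

section Aux

variable {C : Type u} [Category.{v} C]

lemma canonicalMap_ι (X : C) {J : Type v} [SmallCategory J] (D : J ⥤ C) (c : Cocone D)
    (j : J) (f : X ⟶ D.obj j) :
    canonicalMap X D c (colimit.ι (D ⋙ coyoneda.obj (op X)) j f) = f ≫ c.ι.app j := by
  have := congrArg (fun h => h f) (colimit.ι_desc ((coyoneda.obj (op X)).mapCocone c) j)
  simp only [canonicalMap]
  exact this

/-- From injectivity of the canonical map: two maps that agree in the colimit agree at some
finite stage. -/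
lemma exists_of_injective {X : C} {J : Type v} [SmallCategory J] [IsFiltered J]
    {D : J ⥤ C} {c : Cocone D} (hinj : Function.Injective (canonicalMap X D c))
    {j j' : J} (f : X ⟶ D.obj j) (g : X ⟶ D.obj j')
    (h : f ≫ c.ι.app j = g ≫ c.ι.app j') :
    ∃ (k : J) (u : j ⟶ k) (v : j' ⟶ k), f ≫ D.map u = g ≫ D.map v := by
  have hx : canonicalMap X D c (colimit.ι (D ⋙ coyoneda.obj (op X)) j f) =
      canonicalMap X D c (colimit.ι (D ⋙ coyoneda.obj (op X)) j' g) := by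
    rw [canonicalMap_ι, canonicalMap_ι, h]
  have := hinj hx
  rw [Types.FilteredColimit.colimit_eq_iff] at this
  obtain ⟨k, u, v, huv⟩ := this
  exact ⟨k, u, v, huv⟩

/-- From surjectivity of the canonical map: every map to the colimit factors through some stage. -/
lemma exists_of_surjective {X : C} {J : Type v} [SmallCategory J]
    {D : J ⥤ C} {c : Cocone D} (hsurj : Function.Surjective (canonicalMap X D c))
    (f : X ⟶ c.pt) : ∃ (j : J) (g : X ⟶ D.obj j), g ≫ c.ι.app j = f := by
  obtain ⟨x, hx⟩ := hsurj f
  obtain ⟨j, y, hy⟩ := Types.jointly_surjective' x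
  exact ⟨j, y, by rw [← hx, ← hy, canonicalMap_ι]⟩

/-- Criterion for injectivity of the canonical map. -/
lemma injective_of_exists {X : C} {J : Type v} [SmallCategory J] [IsFiltered J]
    {D : J ⥤ C} {c : Cocone D}
    (H : ∀ (j j' : J) (f : X ⟶ D.obj j) (g : X ⟶ D.obj j'),
      f ≫ c.ι.app j = g ≫ c.ι.app j' →
      ∃ (k : J) (u : j ⟶ k) (v : j' ⟶ k), f ≫ D.map u = g ≫ D.map v) :
    Function.Injective (canonicalMap X D c) := by
  intro x y hxy
  obtain ⟨j, f, hf⟩ := Types.jointly_surjective' x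
  obtain ⟨j', g, hg⟩ := Types.jointly_surjective' y
  rw [← hf, ← hg, canonicalMap_ι, canonicalMap_ι] at hxy
  obtain ⟨k, u, v, huv⟩ := H j j' f g hxy
  rw [← hf, ← hg, Types.FilteredColimit.colimit_eq_iff]
  exact ⟨k, u, v, huv⟩

end Aux

set_option linter.unusedVariables false in
open MonoidalCategory in
/-- In a locally presentable closed symmetric monoidal abelian category whose
unit is a finitely presented projective separator, the tensor product of two finitely
generated objects is finitely generated. -/
theorem statement4 {C : Type u} [Category.{v} C] [Abelian C] [MonoidalCategory C]
    [SymmetricCategory C] [MonoidalClosed C] [LocallyPresentable C]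
    (hV1 : IsFinitelyPresented (𝟙_ C)) (hV2 : Projective (𝟙_ C))
    (hV3 : IsSeparator (𝟙_ C))
    (M N : C) (hM : IsFinitelyGenerated M) (hN : IsFinitelyGenerated N) :
    IsFinitelyGenerated (M ⊗ N) := by
  intro J _ _ D c hc
  -- the internal-hom diagram
  set E : J ⥤ C := D ⋙ ihom N with hE
  -- comparison map from the colimit of the internal homs
  set φ : colimit E ⟶ (ihom N).obj c.pt :=
    colimit.desc E ((ihom N).mapCocone c) with hφ
  have hιφ : ∀ j : J, colimit.ι E j ≫ φ = (ihom N).map (c.ι.app j) := by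
    intro j; simp [hφ]
  -- `φ` is a monomorphism
  have hmono : Mono φ := by
    constructor
    intro Z a b hab
    refine (isSeparator_def _).mp hV3 _ _ fun s => ?_
    have hsφ : (s ≫ a) ≫ φ = (s ≫ b) ≫ φ := by
      rw [Category.assoc, Category.assoc, hab]
    -- factor `s ≫ a` and `s ≫ b` through finite stages, using that the unit is f.p.
    obtain ⟨j, sa, hsa⟩ := exists_of_surjective
      (hV1 J E (colimit.cocone E) (colimit.isColimit E)).2 (s ≫ a)
    obtain ⟨j', sb, hsb⟩ := exists_of_surjective
      (hV1 J E (colimit.cocone E) (colimit.isColimit E)).2 (s ≫ b)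
    simp only [colimit.cocone_ι] at hsa hsb
    -- translate to maps `N ⟶ D.obj _` via uncurrying
    have key : ((ρ_ N).inv ≫ MonoidalClosed.uncurry sa) ≫ c.ι.app j =
        ((ρ_ N).inv ≫ MonoidalClosed.uncurry sb) ≫ c.ι.app j' := by
      rw [Category.assoc, Category.assoc, ← MonoidalClosed.uncurry_natural_right,
        ← MonoidalClosed.uncurry_natural_right]
      congr 2
      have := hsφ
      rw [← hsa, ← hsb, Category.assoc, Category.assoc, hιφ, hιφ] at this
      exact this
    obtain ⟨k, u, v, huv⟩ := exists_of_injective (hN J D c hc) _ _ key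
    have huv' : MonoidalClosed.uncurry sa ≫ D.map u = MonoidalClosed.uncurry sb ≫ D.map v := by
      have := (ρ_ N).hom ≫= huv
      simpa using this
    have hsE : sa ≫ E.map u = sb ≫ E.map v := by
      apply MonoidalClosed.uncurry_injective
      show MonoidalClosed.uncurry (sa ≫ (ihom N).map (D.map u)) =
        MonoidalClosed.uncurry (sb ≫ (ihom N).map (D.map v))
      rw [MonoidalClosed.uncurry_natural_right, MonoidalClosed.uncurry_natural_right]
      exact huv'
    calc s ≫ a = sa ≫ colimit.ι E j := hsa.symm
      _ = (sa ≫ E.map u) ≫ colimit.ι E k := by rw [Category.assoc, colimit.w]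
      _ = (sb ≫ E.map v) ≫ colimit.ι E k := by rw [hsE]
      _ = sb ≫ colimit.ι E j' := by rw [Category.assoc, colimit.w]
      _ = s ≫ b := hsb
  -- main argument
  apply injective_of_exists
  intro j j' f g hfg
  -- curry `f` and `g` into maps out of `M`
  set f₁ : M ⟶ E.obj j := MonoidalClosed.curry ((β_ N M).hom ≫ f) with hf₁
  set g₁ : M ⟶ E.obj j' := MonoidalClosed.curry ((β_ N M).hom ≫ g) with hg₁
  have hcol : f₁ ≫ colimit.ι E j = g₁ ≫ colimit.ι E j' := by
    rw [← cancel_mono φ, Category.assoc, Category.assoc, hιφ, hιφ, hf₁, hg₁,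
      ← MonoidalClosed.curry_natural_right, ← MonoidalClosed.curry_natural_right,
      Category.assoc, Category.assoc, hfg]
  obtain ⟨k, u, v, huv⟩ := exists_of_injective
    (hM J E (colimit.cocone E) (colimit.isColimit E)) f₁ g₁ (by simpa using hcol)
  refine ⟨k, u, v, ?_⟩
  have h2 : ((β_ N M).hom ≫ f) ≫ D.map u = ((β_ N M).hom ≫ g) ≫ D.map v := by
    have h3 := congrArg MonoidalClosed.uncurry huv
    rw [show E.map u = (ihom N).map (D.map u) from rfl,
      show E.map v = (ihom N).map (D.map v) from rfl,
      MonoidalClosed.uncurry_natural_right, MonoidalClosed.uncurry_natural_right,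
      hf₁, hg₁, MonoidalClosed.uncurry_curry, MonoidalClosed.uncurry_curry] at h3
    exact h3
  rw [Category.assoc, Category.assoc, cancel_epi] at h2
  exact h2

end Paper
end

section
/- Let A be a commutative ring, I a finitely generated ideal of A, and M an A-module. Then the I-adic completion \hat{M} = lim_n M/(I^n M) is I-adically complete: the canonical map \hat{M} → lim_n \hat{M}/(I^n \hat{M}) is bijective (i.e., \hat{M} is I-adically Hausdorff and the map is surjective). -/
open Submodule

section Aux

variable {A : Type*} [CommRing A] {M : Type*} [AddCommGroup M] [Module A M]

/-- Decomposition of an element of `span (range g) • N` as a finite combination. -/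
lemma statement11_aux_decomp {ι : Type*} [Fintype ι] (g : ι → A) (N : Submodule A M) {y : M}
    (hy : y ∈ Ideal.span (Set.range g) • N) :
    ∃ c : ι → M, (∀ j, c j ∈ N) ∧ y = ∑ j, g j • c j := by
  refine Submodule.smul_induction_on hy ?_ ?_
  · intro r hr m hm
    obtain ⟨a, ha⟩ := (mem_span_range_iff_exists_fun A).mp hr
    refine ⟨fun j => a j • m, fun j => N.smul_mem _ hm, ?_⟩
    rw [← ha, Finset.sum_smul]
    exact Finset.sum_congr rfl fun j _ => by
      rw [smul_eq_mul, mul_comm, mul_smul]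
  · rintro x y ⟨cx, hcxN, rfl⟩ ⟨cy, hcyN, rfl⟩
    refine ⟨fun j => cx j + cy j, fun j => N.add_mem (hcxN j) (hcyN j), ?_⟩
    rw [← Finset.sum_add_distrib]
    exact Finset.sum_congr rfl fun j _ => by rw [smul_add]

/-- `I ^ k • ⊤` is contained in the kernel of evaluation at level `k`. -/
lemma statement11_aux_le_ker (I : Ideal A) (k : ℕ) :
    (I ^ k • ⊤ : Submodule A (AdicCompletion I M)) ≤
      LinearMap.ker (AdicCompletion.eval I M k) := by
  refine Submodule.smul_le.mpr fun r hr x _ => ?_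
  obtain ⟨y, hy⟩ := Submodule.Quotient.mk_surjective _ (x.val k)
  rw [LinearMap.mem_ker, AdicCompletion.eval_apply]
  show r • x.val k = 0
  rw [← hy,
    ← Submodule.Quotient.mk_smul, Submodule.Quotient.mk_eq_zero]
  exact Submodule.smul_mem_smul hr mem_top

/-- The key lemma: if `I` is finitely generated and `x` in the adic completion evaluates
to zero at level `n`, then `x ∈ I ^ n • ⊤`. -/
lemma statement11_aux_mem_smul (I : Ideal A) (hI : I.FG) (n : ℕ)
    (x : AdicCompletion I M) (hx : x.val n = 0) :
    x ∈ (I ^ n • ⊤ : Submodule A (AdicCompletion I M)) := by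
  obtain ⟨f, rfl⟩ := AdicCompletion.mk_surjective I M x
  obtain ⟨S, hS⟩ := Submodule.FG.pow hI n
  set g : S → A := fun j => (j : A) with hgdef
  have hg : Ideal.span (Set.range g) = I ^ n := by
    rw [hgdef, Subtype.range_coe_subtype, Finset.setOf_mem]; exact hS
  -- the successive differences of the Cauchy sequence, shifted by `n`
  set d : ℕ → M := fun i => match i with
    | 0 => f n
    | (i + 1) => f (n + i + 1) - f (n + i) with hd
  have hfn : (f : ℕ → M) n ∈ (I ^ n • ⊤ : Submodule A M) := by
    have : (AdicCompletion.mk I M f).val n = 0 := hx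
    rw [AdicCompletion.mk_apply_coe, Submodule.mkQ_apply,
      Submodule.Quotient.mk_eq_zero] at this
    exact this
  have hmem : ∀ i, d i ∈ Ideal.span (Set.range g) • (I ^ (i - 1) • ⊤ : Submodule A M) := by
    intro i
    rw [hg]
    match i with
    | 0 =>
      have h0 : (I ^ n • (I ^ 0 • ⊤ : Submodule A M)) = I ^ n • ⊤ := by
        rw [pow_zero, one_smul]
      show d 0 ∈ I ^ n • (I ^ 0 • ⊤ : Submodule A M)
      rw [h0]
      exact hfn
    | (i + 1) =>
      have h1 : f (n + i) ≡ f (n + i + 1) [SMOD (I ^ (n + i) • ⊤ : Submodule A M)] :=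
        f.property (Nat.le_succ _)
      have h2 : f (n + i + 1) - f (n + i) ∈ (I ^ (n + i) • ⊤ : Submodule A M) :=
        SModEq.sub_mem.mp h1.symm
      have h3 : (I ^ (n + i) • ⊤ : Submodule A M) = I ^ n • (I ^ i • ⊤ : Submodule A M) := by
        rw [pow_add, mul_smul]
      show d (i + 1) ∈ I ^ n • (I ^ i • ⊤ : Submodule A M)
      rw [← h3]
      exact h2
  choose c hcN hcs using fun i => statement11_aux_decomp g _ (hmem i)
  -- the partial sums of `c · j` define elements of the adic completion
  have hζmem : ∀ (j : S) {m m' : ℕ} (hmm' : m ≤ m'),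
      AdicCompletion.transitionMap I M hmm'
        (Submodule.mkQ _ (∑ i ∈ Finset.range (m' + 1), c i j)) =
        Submodule.mkQ _ (∑ i ∈ Finset.range (m + 1), c i j) := by
    intro j m m' hmm'
    rw [AdicCompletion.transitionMap, Submodule.factorPow, Submodule.factor_mk,
      Submodule.mkQ_apply, Submodule.mkQ_apply,
      Submodule.Quotient.eq, ← Finset.sum_Ico_eq_sub _ (by omega : m + 1 ≤ m' + 1)]
    exact Submodule.sum_mem _ fun i hi => by
      have hi' : m ≤ i - 1 := by
        have := (Finset.mem_Ico.mp hi).1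
        omega
      exact Submodule.smul_mono_left (Ideal.pow_le_pow_right hi') (hcN i j)
  set ζ : S → AdicCompletion I M := fun j =>
    ⟨fun m => Submodule.mkQ _ (∑ i ∈ Finset.range (m + 1), c i j),
      fun {m m'} hmm' => hζmem j hmm'⟩ with hζ
  -- telescoping
  have htel : ∀ m, ∑ i ∈ Finset.range (m + 1), d i = f (n + m) := by
    intro m
    induction m with
    | zero => simp [hd]
    | succ m ih =>
      rw [Finset.sum_range_succ, ih]
      show f (n + m) + (f (n + m + 1) - f (n + m)) = f (n + (m + 1))
      abel
  have hkey : AdicCompletion.mk I M f = ∑ j, g j • ζ j := by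
    ext m
    rw [AdicCompletion.mk_apply_coe, AdicCompletion.val_sum_apply]
    have hval : ∀ j : S, (g j • ζ j).val m =
        Submodule.mkQ _ (∑ i ∈ Finset.range (m + 1), g j • c i j) := by
      intro j
      rw [AdicCompletion.val_smul, hζ]
      show g j • Submodule.mkQ (I ^ m • ⊤ : Submodule A M) (∑ i ∈ Finset.range (m + 1), c i j) = _
      rw [Submodule.mkQ_apply, Submodule.mkQ_apply, ← Submodule.Quotient.mk_smul,
        Finset.smul_sum]
    rw [Finset.sum_congr rfl fun j _ => hval j]
    have hsum : (∑ j : S, Submodule.mkQ (I ^ m • ⊤ : Submodule A M)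
        (∑ i ∈ Finset.range (m + 1), g j • c i j)) =
        Submodule.mkQ _ (∑ j : S, ∑ i ∈ Finset.range (m + 1), g j • c i j) := by
      rw [map_sum]
    rw [hsum, Finset.sum_comm]
    have hswap : ∀ i ∈ Finset.range (m + 1), (∑ j : S, g j • c i j) = d i := by
      intro i _
      exact (hcs i).symm
    rw [Finset.sum_congr rfl hswap, htel m, Submodule.mkQ_apply, Submodule.mkQ_apply,
      Submodule.Quotient.eq]
    exact SModEq.sub_mem.mp (f.property (by omega : m ≤ n + m))
  rw [hkey]
  refine Submodule.sum_mem _ fun j _ => ?_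
  have hgj : g j ∈ I ^ n := by
    rw [← hg]
    exact Ideal.subset_span ⟨j, rfl⟩
  exact Submodule.smul_mem_smul hgj mem_top

end Aux

/-- For a finitely generated ideal `I` of a commutative ring `A` and an
`A`-module `M`, the `I`-adic completion of `M` is `I`-adically complete. -/
theorem statement11 {A : Type*} [CommRing A] (I : Ideal A) (hI : I.FG)
    (M : Type*) [AddCommGroup M] [Module A M] :
    IsAdicComplete I (AdicCompletion I M) := by
  haveI : IsPrecomplete I (AdicCompletion I M) := by
    constructor
    intro f hf
    have hLmem : ∀ {m n : ℕ} (hmn : m ≤ n),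
        AdicCompletion.transitionMap I M hmn ((f n).val n) = (f m).val m := by
      intro m n hmn
      have h2 : f n - f m ∈ (I ^ m • ⊤ : Submodule A (AdicCompletion I M)) :=
        SModEq.sub_mem.mp (hf hmn).symm
      have h3 : (f n - f m).val m = 0 := statement11_aux_le_ker I m h2
      rw [AdicCompletion.val_sub_apply, sub_eq_zero] at h3
      rw [(f n).property hmn, h3]
    refine ⟨⟨fun m => (f m).val m, fun {m n} hmn => hLmem hmn⟩, fun n => ?_⟩
    refine SModEq.sub_mem.mpr ?_
    refine statement11_aux_mem_smul I hI n _ ?_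
    exact sub_self ((f n).val n)
  constructor
end

section
/- Let A be a commutative ring and I a finitely generated ideal of A. Let \hat{A} = lim_n A/I^n be the I-adic completion of A, with canonical projections π_n : \hat{A} → A/I^n. Then for every n ≥ 1, the ideal I^n \hat{A} of \hat{A} generated by the image of I^n under the canonical ring homomorphism A → \hat{A} equals the kernel of π_n. -/
open AdicCompletion Submodule in
/-- For a finitely generated ideal `I` of a commutative ring `A`, the ideal
of the `I`-adic completion generated by the image of `I ^ n` is the kernel of the canonical
projection to `A ⧸ I ^ n`, for every `n ≥ 1`. -/
theorem statement12 {A : Type*} [CommRing A] (I : Ideal A) (hI : I.FG)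
    (n : ℕ) (hn : 1 ≤ n) :
    Ideal.map (algebraMap A (AdicCompletion I A)) (I ^ n) =
      RingHom.ker (AdicCompletion.evalₐ I n) := by
  apply le_antisymm
  · rw [Ideal.map_le_iff_le_comap]
    intro a ha
    have : (AdicCompletion.evalₐ I n) (algebraMap A (AdicCompletion I A) a)
        = algebraMap A (A ⧸ I ^ n) a := (AdicCompletion.evalₐ I n).commutes a
    simp only [Ideal.mem_comap, RingHom.mem_ker, RingHom.coe_coe, this,
      Ideal.Quotient.algebraMap_eq, Ideal.Quotient.eq_zero_iff_mem]
    exact ha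
  · intro x hx
    obtain ⟨f, rfl⟩ := AdicCompletion.mk_surjective I A x
    rw [RingHom.mem_ker, AdicCompletion.evalₐ_mk,
      Ideal.Quotient.eq_zero_iff_mem] at hx
    -- hx : f.val n ∈ I ^ n
    obtain ⟨s, hs⟩ := Submodule.FG.pow hI n
    set g : (↑s : Set A) → A := fun i => (i : A) with hg
    have hspan : Submodule.span A (Set.range g) = I ^ n := by
      rw [hg, Subtype.range_coe]; exact hs
    have key : ∀ t : ℕ,
        f.val (n + t + 1) - f.val (n + t) ∈ I ^ t • Submodule.span A (Set.range g) := by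
      intro t
      have h1 : f.val (n + t + 1) - f.val (n + t) ∈ (I ^ (n + t) • ⊤ : Submodule A A) :=
        SModEq.sub_mem.mp ((f.property (Nat.le_succ (n + t))).symm)
      have h2 : (I ^ (n + t) • ⊤ : Ideal A) = I ^ t • Submodule.span A (Set.range g) := by
        rw [hspan, smul_eq_mul, smul_eq_mul, Ideal.mul_top, ← pow_add, add_comm n t]
      rwa [h2] at h1
    choose c hc hcs using fun t =>
      (Submodule.mem_ideal_smul_span_iff_exists_sum (I ^ t) g _).mp (key t)
    have hseq : ∀ (i : (↑s : Set A)) (m : ℕ),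
        (∑ t ∈ Finset.range m, c t i) ≡ (∑ t ∈ Finset.range (m + 1), c t i)
          [SMOD (I ^ m • ⊤ : Submodule A A)] := by
      intro i m
      rw [SModEq.sub_mem, Finset.sum_range_succ, sub_add_cancel_left]
      refine Submodule.neg_mem _ ?_
      rw [smul_eq_mul, Ideal.mul_top]
      exact hc m i
    set y : (↑s : Set A) → AdicCompletion I A := fun i =>
      AdicCompletion.mk I A
        (AdicCauchySequence.mk I A (fun m => ∑ t ∈ Finset.range m, c t i) (hseq i)) with hy
    have hxeq : AdicCompletion.mk I A f =
        algebraMap A (AdicCompletion I A) (f.val n) +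
          ∑ i : (↑s : Set A), algebraMap A (AdicCompletion I A) (g i) * y i := by
      apply AdicCompletion.ext
      intro m
      have hval : ∀ a : A, (algebraMap A (AdicCompletion I A) a).val m =
          Ideal.Quotient.mk (I ^ m • ⊤ : Ideal A) a := fun a => rfl
      have hyval : ∀ i : (↑s : Set A), (y i).val m =
          Ideal.Quotient.mk (I ^ m • ⊤ : Ideal A) (∑ t ∈ Finset.range m, c t i) := fun i => rfl
      have hmkf : (AdicCompletion.mk I A f).val m =
          Ideal.Quotient.mk (I ^ m • ⊤ : Ideal A) (f.val m) := rfl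
      rw [AdicCompletion.val_add_apply, AdicCompletion.val_sum_apply, hmkf, hval]
      simp only [AdicCompletion.val_mul, hval, hyval, ← map_mul, ← map_sum, ← map_add]
      have hsum : (f.val n + ∑ i : (↑s : Set A), g i * ∑ t ∈ Finset.range m, c t i)
          = f.val (n + m) := by
        have h1 : ∀ i : (↑s : Set A), g i * ∑ t ∈ Finset.range m, c t i
            = ∑ t ∈ Finset.range m, c t i • g i := by
          intro i
          rw [Finset.mul_sum]
          exact Finset.sum_congr rfl fun t _ => by rw [smul_eq_mul, mul_comm]
        simp only [h1]
        rw [Finset.sum_comm]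
        have h2 : ∀ t, (∑ i : (↑s : Set A), c t i • g i) = f.val (n + t + 1) - f.val (n + t) := by
          intro t
          rw [← hcs t, Finsupp.sum_fintype _ _ (fun i => zero_smul A (g i))]
        simp only [h2]
        show f.val n + ∑ x ∈ Finset.range m, (f.val (n + (x + 1)) - f.val (n + x)) = f.val (n + m)
        rw [Finset.sum_range_sub (fun t => f.val (n + t))]
        ring_nf
      rw [hsum]
      exact f.property (Nat.le_add_left m n)
    rw [hxeq]
    refine Ideal.add_mem _ (Ideal.mem_map_of_mem _ hx) ?_
    refine Ideal.sum_mem _ fun i _ => Ideal.mul_mem_right _ _ (Ideal.mem_map_of_mem _ ?_)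
    rw [← hs]
    exact Ideal.subset_span i.2
end

section
/- Let A be a commutative ring and I a finitely generated ideal of A. Let \hat{A} = lim_n A/I^n be the I-adic completion of A and let \hat{I} = I\hat{A} be the ideal of \hat{A} generated by the image of I under the canonical ring homomorphism A → \hat{A}. Then \hat{A} is \hat{I}-adically complete: the canonical map \hat{A} → lim_n \hat{A}/\hat{I}^n is bijective. -/
namespace Statement13Aux

open AdicCompletion Submodule

variable {A : Type*} [CommRing A] (I : Ideal A)

lemma statement13_smul_top_eq (k : ℕ) : (I ^ k • ⊤ : Ideal A) = I ^ k := by ext x; simp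

lemma statement13_algebraMap_val (a : A) (m : ℕ) :
    (algebraMap A (AdicCompletion I A) a).val m = Submodule.Quotient.mk a := rfl

-- easy direction
lemma statement13_easy (m : ℕ) {y : AdicCompletion I A}
    (hy : y ∈ (Ideal.map (algebraMap A (AdicCompletion I A)) I) ^ m) : y.val m = 0 := by
  rw [← Ideal.map_pow] at hy
  have h : Ideal.map (algebraMap A (AdicCompletion I A)) (I ^ m) ≤
      RingHom.ker (evalₐ I m) := by
    rw [Ideal.map_le_iff_le_comap]
    intro a ha
    simp only [Ideal.mem_comap, RingHom.mem_ker]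
    rw [AlgHom.commutes]
    exact Ideal.Quotient.eq_zero_iff_mem.mpr ha
  have := h hy
  rw [RingHom.mem_ker] at this
  have h2 : evalₐ I m y = Ideal.quotientEquivAlgOfEq A
      (by ext x; simp : (I ^ m • ⊤ : Ideal A) = I ^ m) (AdicCompletion.eval I A m y) := rfl
  rw [h2, EmbeddingLike.map_eq_zero_iff] at this
  exact this

lemma statement13_key (hI : I.FG) (n : ℕ) (x : AdicCompletion I A) (hx : x.val n = 0) :
    x ∈ (Ideal.map (algebraMap A (AdicCompletion I A)) I) ^ n := by
  obtain ⟨f, rfl⟩ := AdicCompletion.mk_surjective I A x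
  have hfn : f.val n ∈ I ^ n := by
    have h0 : Submodule.Quotient.mk (p := (I ^ n • ⊤ : Submodule A A)) (f.val n) = 0 := hx
    rw [Submodule.Quotient.mk_eq_zero, statement13_smul_top_eq] at h0
    exact h0
  set g : ℕ → A := fun m => f.val (max m n) with hg
  have hgc : AdicCompletion.IsAdicCauchy I A g := by
    intro m m' h
    exact SModEq.mono (Submodule.smul_mono_left (Ideal.pow_le_pow_right (le_max_left m n)))
      (f.property (max_le_max h le_rfl))
  set G : AdicCauchySequence I A := ⟨g, hgc⟩ with hG
  have hGf : AdicCompletion.mk I A G = AdicCompletion.mk I A f := by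
    ext m
    show Submodule.Quotient.mk (g m) = Submodule.Quotient.mk (f.val m)
    exact SModEq.def.mp (f.property (le_max_left m n)).symm
  have hgI : ∀ m, g m ∈ I ^ n := by
    intro m
    have h1 := SModEq.sub_mem.mp (f.property (le_max_right m n))
    rw [statement13_smul_top_eq] at h1
    have h2 : g m = f.val n - (f.val n - f.val (max m n)) := by ring
    rw [h2]
    exact sub_mem hfn h1
  obtain ⟨k, v, hv⟩ := Submodule.fg_iff_exists_fin_generating_family.mp (Submodule.FG.pow hI n)
  have hD : ∀ m : ℕ, g (n + m + 1) - g (n + m) ∈ I ^ m • Submodule.span A (Set.range v) := by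
    intro m
    rw [hv, smul_eq_mul, ← pow_add, add_comm m n]
    have h1 := SModEq.sub_mem.mp (hgc (Nat.le_succ (n + m))).symm
    rw [statement13_smul_top_eq] at h1
    exact h1
  choose c hc1 hc2 using fun m =>
    (Submodule.mem_ideal_smul_span_iff_exists_sum (I ^ m) v _).mp (hD m)
  have hcsum : ∀ m, ∑ i : Fin k, c m i • v i = g (n + m + 1) - g (n + m) := by
    intro m
    rw [← hc2 m]
    exact (Finsupp.sum_fintype (c m) (fun i r => r • v i) (fun i => zero_smul A (v i))).symm
  set b : Fin k → ℕ → A := fun i m => ∑ t ∈ Finset.range m, c t i with hb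
  have hbc : ∀ i m, b i m ≡ b i (m + 1) [SMOD (I ^ m • ⊤ : Submodule A A)] := by
    intro i m
    rw [SModEq.sub_mem]
    have h1 : b i m - b i (m + 1) = -(c m i) := by
      simp [hb, Finset.sum_range_succ]
    rw [h1, statement13_smul_top_eq]
    exact neg_mem (hc1 m i)
  set B : Fin k → AdicCompletion I A :=
    fun i => AdicCompletion.mk I A (AdicCauchySequence.mk I A (b i) (hbc i)) with hB
  have htel : ∀ m, g (n + m) = g n + ∑ i : Fin k, b i m * v i := by
    intro m
    induction m with
    | zero => simp [hb]
    | succ m ih =>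
      have h1 : g (n + (m + 1)) = g (n + m) + ∑ i : Fin k, c m i • v i := by
        rw [hcsum m]; ring_nf
      rw [h1, ih]
      have h2 : ∀ i : Fin k, b i (m + 1) * v i = b i m * v i + c m i • v i := by
        intro i
        simp only [hb, Finset.sum_range_succ, smul_eq_mul]
        ring
      have h3 : ∑ i : Fin k, b i (m + 1) * v i =
          ∑ i : Fin k, b i m * v i + ∑ i : Fin k, c m i • v i := by
        rw [← Finset.sum_add_distrib]
        exact Finset.sum_congr rfl fun i _ => h2 i
      rw [h3]
      ring
  have hx_eq : AdicCompletion.mk I A G =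
      algebraMap A (AdicCompletion I A) (g n) + ∑ i : Fin k, algebraMap A _ (v i) * B i := by
    ext m
    have hRHS : ((algebraMap A (AdicCompletion I A) (g n) +
        ∑ i : Fin k, algebraMap A _ (v i) * B i)).val m =
        Submodule.Quotient.mk (p := (I ^ m • ⊤ : Submodule A A)) (g n + ∑ i : Fin k, v i * b i m) := by
      rw [AdicCompletion.val_add, AdicCompletion.val_sum]
      simp only [AdicCompletion.val_mul, statement13_algebraMap_val, hB]
      have hBval : ∀ i : Fin k,
          ((AdicCompletion.mk I A) (AdicCauchySequence.mk I A (b i) (hbc i))).val m =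
          Submodule.Quotient.mk (b i m) := fun i => rfl
      rw [Pi.add_apply, Finset.sum_apply]
      change Submodule.Quotient.mk (g n) + ∑ i : Fin k, (Submodule.Quotient.mk (v i) : A ⧸ (I ^ m • ⊤ : Submodule A A)) *
          Submodule.Quotient.mk (b i m) = _
      have : ∀ i : Fin k, (Submodule.Quotient.mk (v i) : A ⧸ (I ^ m • ⊤ : Submodule A A)) *
          Submodule.Quotient.mk (b i m) = Submodule.Quotient.mk (v i * b i m) := fun i => rfl
      simp only [this]
      have hsum : (∑ x : Fin k, (Submodule.Quotient.mk (v x * b x m) :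
          A ⧸ (I ^ m • ⊤ : Submodule A A))) =
          Submodule.Quotient.mk (∑ x : Fin k, v x * b x m) := by
        simp only [← Submodule.mkQ_apply, ← map_sum]
      rw [hsum, ← Submodule.Quotient.mk_add]
    rw [hRHS]
    have h2 : g n + ∑ i : Fin k, v i * b i m = g (n + m) := by
      rw [htel m]
      congr 1
      exact Finset.sum_congr rfl fun i _ => mul_comm _ _
    rw [h2]
    show Submodule.Quotient.mk (g m) = Submodule.Quotient.mk (g (n + m))
    exact SModEq.def.mp (hgc (Nat.le_add_left m n))
  rw [← hGf, hx_eq]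
  refine Ideal.add_mem _ ?_ (Ideal.sum_mem _ fun i _ => ?_)
  · rw [← Ideal.map_pow]
    exact Ideal.mem_map_of_mem _ (hgI n)
  · rw [← Ideal.map_pow]
    exact Ideal.mul_mem_right _ _ (Ideal.mem_map_of_mem _ (hv ▸ Submodule.subset_span ⟨i, rfl⟩))

end Statement13Aux

/-- For a finitely generated ideal `I` of a commutative ring `A`, the
`I`-adic completion of `A` is adically complete with respect to the extended ideal
`I·Â = Ideal.map (algebraMap A Â) I`. -/
theorem statement13 {A : Type*} [CommRing A] (I : Ideal A) (hI : I.FG) :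
    IsAdicComplete (Ideal.map (algebraMap A (AdicCompletion I A)) I)
      (AdicCompletion I A) := by
  open Statement13Aux in
  set J := Ideal.map (algebraMap A (AdicCompletion I A)) I with hJ
  have hmem : ∀ (m : ℕ) (y : AdicCompletion I A),
      y ∈ (J ^ m • ⊤ : Submodule (AdicCompletion I A) (AdicCompletion I A)) → y.val m = 0 := by
    intro m y hy
    rw [show (J ^ m • ⊤ : Ideal (AdicCompletion I A)) = J ^ m from statement13_smul_top_eq J m] at hy
    exact statement13_easy I m hy
  refine { toIsHausdorff := ⟨?_⟩, toIsPrecomplete := ⟨?_⟩ }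
  · intro x h
    ext m
    rw [AdicCompletion.val_zero]
    exact hmem m x (SModEq.zero.mp (h m))
  · intro f hf
    have hcomp : ∀ {m n : ℕ} (hmn : m ≤ n),
        AdicCompletion.transitionMap I A hmn ((f n).val n) = (f m).val m := by
      intro m n hmn
      rw [AdicCompletion.transitionMap_comp_eval_apply I A hmn (f n)]
      have h1 : ((f n) - (f m)).val m = 0 :=
        hmem m _ (SModEq.sub_mem.mp (hf hmn).symm)
      rw [AdicCompletion.val_sub] at h1
      exact sub_eq_zero.mp h1
    refine ⟨⟨fun m => (f m).val m, fun {m n} hmn => hcomp hmn⟩, fun n => ?_⟩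
    refine SModEq.sub_mem.mpr ((statement13_smul_top_eq J n).ge ?_)
    apply statement13_key I hI n
    change (f n).val n - (f n).val n = 0
    exact sub_eq_zero.mpr rfl
end

section
/- Let A be a commutative ring, I a finitely generated ideal of A, and M an A-module. Let \hat{M} = lim_n M/(I^n M) be the I-adic completion of M, with canonical projections π_n : \hat{M} → M/(I^n M). Then for every n ≥ 1, the submodule I^n \hat{M} of \hat{M} equals the kernel of π_n. -/
open Submodule AdicCompletion

/-- If `J` is spanned by a finite set `t`, every element of `J • N` is a sum
`∑ i ∈ t, i • c i` with all `c i ∈ N`. -/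
lemma exists_finset_smul_rep {A : Type*} [CommRing A] {M : Type*} [AddCommGroup M] [Module A M]
    {t : Finset A} {J : Ideal A} (ht : Ideal.span (↑t : Set A) = J) (N : Submodule A M) {u : M}
    (hu : u ∈ J • N) : ∃ c : A → M, (∀ i, c i ∈ N) ∧ ∑ i ∈ t, i • c i = u := by
  refine Submodule.smul_induction_on hu ?_ ?_
  · intro r hr x hx
    rw [← ht] at hr
    obtain ⟨g, -, hg⟩ := mem_span_finset.1 hr
    refine ⟨fun i => g i • x, fun i => N.smul_mem _ hx, ?_⟩
    rw [← hg, Finset.sum_smul]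
    refine Finset.sum_congr rfl fun i _ => ?_
    rw [smul_smul, smul_eq_mul, mul_comm]
  · rintro x y ⟨c, hc, hcx⟩ ⟨d, hd, hdy⟩
    exact ⟨fun i => c i + d i, fun i => N.add_mem (hc i) (hd i), by
      simp only [smul_add, Finset.sum_add_distrib, hcx, hdy]⟩

/-- For a finitely generated ideal `I` of a commutative ring `A` and an
`A`-module `M`, the submodule `I ^ n • M̂` of the `I`-adic completion `M̂` equals the kernel of
the canonical projection `M̂ → M ⧸ I ^ n M`, for every `n ≥ 1`. -/
theorem statement14 {A : Type*} [CommRing A] (I : Ideal A) (hI : I.FG)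
    (M : Type*) [AddCommGroup M] [Module A M] (n : ℕ) (hn : 1 ≤ n) :
    (I ^ n • ⊤ : Submodule A (AdicCompletion I M)) =
      LinearMap.ker (AdicCompletion.eval I M n) := by
  apply le_antisymm
  · refine Submodule.smul_le.2 fun r hr x _ => ?_
    rw [LinearMap.mem_ker, map_smul]
    obtain ⟨v, hv⟩ := Submodule.Quotient.mk_surjective _ (AdicCompletion.eval I M n x)
    rw [← hv, ← Submodule.Quotient.mk_smul]
    exact (Submodule.Quotient.mk_eq_zero _).2 (Submodule.smul_mem_smul hr Submodule.mem_top)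
  · intro x hx
    obtain ⟨f, rfl⟩ := AdicCompletion.mk_surjective I M x
    obtain ⟨t, ht⟩ := Submodule.FG.pow hI n
    -- late terms of `f` lie in `I ^ n • ⊤`
    have hfn : ∀ m : ℕ, f (m + n) ∈ (I ^ n • ⊤ : Submodule A M) := by
      intro m
      have h0 : f n ∈ (I ^ n • ⊤ : Submodule A M) := by
        have := LinearMap.mem_ker.1 hx
        have h : Submodule.mkQ (I ^ n • ⊤ : Submodule A M) (f n) = 0 := this
        rwa [Submodule.mkQ_apply, Submodule.Quotient.mk_eq_zero] at h
      have hsm : f n - f (m + n) ∈ (I ^ n • ⊤ : Submodule A M) :=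
        (SModEq.sub_mem).1 (f.property (Nat.le_add_left n m))
      have : f (m + n) = f n - (f n - f (m + n)) := (sub_sub_cancel _ _).symm
      rw [this]
      exact Submodule.sub_mem _ h0 hsm
    -- successive differences lie in `I ^ n • (I ^ m • ⊤)`
    have hd : ∀ m : ℕ,
        f (m + n + 1) - f (m + n) ∈ (I ^ n • (I ^ m • ⊤) : Submodule A M) := by
      intro m
      have h1 : f (m + n) - f (m + n + 1) ∈ (I ^ (m + n) • ⊤ : Submodule A M) :=
        (SModEq.sub_mem).1 (f.property (Nat.le_succ (m + n)))
      have h2 : (I ^ (m + n) • ⊤ : Submodule A M) = I ^ n • (I ^ m • ⊤) := by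
        rw [← Submodule.smul_assoc, smul_eq_mul, ← pow_add, add_comm]
      rw [h2] at h1
      have := Submodule.neg_mem _ h1
      rwa [neg_sub] at this
    choose c hcmem hcsum using fun m =>
      exists_finset_smul_rep ht (I ^ m • ⊤ : Submodule A M) (hd m)
    obtain ⟨c0, -, hc0⟩ := exists_finset_smul_rep ht (⊤ : Submodule A M) (hfn 0)
    -- partial sums
    set s : ℕ → A → M := fun m i => c0 i + ∑ k ∈ Finset.range m, c k i with hs
    have key : ∀ m : ℕ, ∑ i ∈ t, i • s m i = f (m + n) := by
      intro m
      induction m with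
      | zero => simpa [hs] using hc0
      | succ m ih =>
          have : ∀ i, s (m + 1) i = s m i + c m i := by
            intro i
            simp [hs, Finset.sum_range_succ, add_assoc]
          calc ∑ i ∈ t, i • s (m + 1) i
              = ∑ i ∈ t, (i • s m i + i • c m i) := by
                refine Finset.sum_congr rfl fun i _ => ?_
                rw [this i, smul_add]
            _ = (∑ i ∈ t, i • s m i) + ∑ i ∈ t, i • c m i := Finset.sum_add_distrib
            _ = f (m + n) + (f (m + n + 1) - f (m + n)) := by rw [ih, hcsum m]
            _ = f (m + 1 + n) := by
                rw [show m + 1 + n = m + n + 1 from by omega]; abel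
    -- each coefficient sequence is Cauchy
    have hcauchy : ∀ i : A, ∀ m : ℕ,
        s m i ≡ s (m + 1) i [SMOD (I ^ m • ⊤ : Submodule A M)] := by
      intro i m
      rw [SModEq.sub_mem]
      have : s m i - s (m + 1) i = -(c m i) := by
        simp [hs, Finset.sum_range_succ]
      rw [this]
      exact Submodule.neg_mem _ (hcmem m i)
    set y : A → AdicCompletion I M := fun i =>
      AdicCompletion.mk I M (AdicCauchySequence.mk I M (fun m => s m i) (hcauchy i)) with hy
    have hxy : AdicCompletion.mk I M f = ∑ i ∈ t, i • y i := by
      ext m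
      rw [val_sum_apply]
      have : ∀ i ∈ t, (i • y i).val m =
          Submodule.mkQ (I ^ m • ⊤ : Submodule A M) (i • s m i) := by
        intro i _
        rw [val_smul_apply, hy]
        simp only [mk_apply_coe, AdicCauchySequence.mk_coe]
        rw [Submodule.mkQ_apply, Submodule.mkQ_apply, ← Submodule.Quotient.mk_smul]
      rw [Finset.sum_congr rfl this, ← map_sum, key m]
      simp only [mk_apply_coe, Submodule.mkQ_apply]
      exact (AdicCauchySequence.mk_eq_mk (Nat.le_add_right m n) f).symm
    rw [hxy]
    refine Submodule.sum_mem _ fun i hi => ?_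
    have hiI : i ∈ I ^ n := ht ▸ Ideal.subset_span hi
    exact Submodule.smul_mem_smul hiI Submodule.mem_top
end
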